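/- Let N ≥ 4 be an integer and let 1 ≤ j ≤ N−3. Let s ∈ (0, π/2). If G(N, j, s_N^{(j−1)}, s) ≤ 0, where G(N,j,x,s) := (N−j−2)·sin²(s/2) − sin(x/2)·cos(s/2)^{2(N−j−2)} + sin(s/2), then s is (N,j)-good; that is, for every choice of x₁, …, x_{2(N−j−2)} ∈ I_s, the interval I_s is contained in the set { arccos( F(x₁,…,x_{2(N−j−2)}) + cos(φ)·X(x₁,…,x_{2(N−j−2)}) ) : φ ∈ I_{s_N^{(j−1)}} }. -/
import Mathlib


open Real Finset

/-- I_s = [(π−s)/2, (π+s)/2]. -/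
noncomputable def Iset (s : ℝ) : Set ℝ := Set.Icc ((Real.pi - s) / 2) ((Real.pi + s) / 2)

/-- F(x₁,…,x_{2r}) = Σ_{m=1}^{r} cos(a_m)cos(b_m)·∏_{ℓ=1}^{m−1} sin(a_ℓ)sin(b_ℓ),
where a_m = x_{2m−1}, b_m = x_{2m}. -/
noncomputable def Fangle (a b : ℕ → ℝ) (r : ℕ) : ℝ :=
  ∑ m ∈ Finset.Icc 1 r, Real.cos (a m) * Real.cos (b m) *
    ∏ l ∈ Finset.Icc 1 (m - 1), (Real.sin (a l) * Real.sin (b l))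

/-- X(x₁,…,x_{2r}) = ∏_{m=1}^{r} sin(a_m)sin(b_m). -/
noncomputable def Xangle (a b : ℕ → ℝ) (r : ℕ) : ℝ :=
  ∏ m ∈ Finset.Icc 1 r, (Real.sin (a m) * Real.sin (b m))

/-- E(m,s) = m·sin²(s/2) − cos(s/2)^{2m} + sin(s/2). -/
noncomputable def Efun (m : ℕ) (s : ℝ) : ℝ :=
  (m : ℝ) * Real.sin (s / 2) ^ 2 - Real.cos (s / 2) ^ (2 * m) + Real.sin (s / 2)

/-- G(N,j,x,s) = (N−j−2)·sin²(s/2) − sin(x/2)·cos(s/2)^{2(N−j−2)} + sin(s/2). -/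
noncomputable def Gfun (N j : ℕ) (x s : ℝ) : ℝ :=
  ((N - j - 2 : ℕ) : ℝ) * Real.sin (s / 2) ^ 2
    - Real.sin (x / 2) * Real.cos (s / 2) ^ (2 * (N - j - 2)) + Real.sin (s / 2)

/-- The sequence s_N^{(j)}: s_N^{(0)} = inf{s > 0 : E(N−2,s) = 0},
s_N^{(j)} = inf{s > 0 : G(N,j,s_N^{(j−1)},s) = 0}. -/
noncomputable def sSeq (N : ℕ) : ℕ → ℝ
  | 0 => sInf {s : ℝ | 0 < s ∧ Efun (N - 2) s = 0}
  | j + 1 => sInf {s : ℝ | 0 < s ∧ Gfun N (j + 1) (sSeq N j) s = 0}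

/-- s is N-good: for all x₁,…,x_{2(N−2)} ∈ I_s,
I_s ⊆ α_{N−1,N}({x₁}×⋯×{x_{2(N−2)}}×(0,π)). -/
def NGood (N : ℕ) (s : ℝ) : Prop :=
  ∀ a b : ℕ → ℝ, (∀ m ∈ Finset.Icc 1 (N - 2), a m ∈ Iset s ∧ b m ∈ Iset s) →
    ∀ y ∈ Iset s, ∃ φ ∈ Set.Ioo (0 : ℝ) Real.pi,
      Real.arccos (Fangle a b (N - 2) + Real.cos φ * Xangle a b (N - 2)) = y

/-- s is (N,j)-good: for all x₁,…,x_{2(N−j−2)} ∈ I_s,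
I_s ⊆ α_{N−j−1,N−j}({x₁}×⋯×{x_{2(N−j−2)}}×I_{s_N^{(j−1)}}). -/
def NjGood (N j : ℕ) (s : ℝ) : Prop :=
  ∀ a b : ℕ → ℝ, (∀ m ∈ Finset.Icc 1 (N - j - 2), a m ∈ Iset s ∧ b m ∈ Iset s) →
    ∀ y ∈ Iset s, ∃ φ ∈ Iset (sSeq N (j - 1)),
      Real.arccos (Fangle a b (N - j - 2) + Real.cos φ * Xangle a b (N - j - 2)) = y

lemma sSeq_nonneg (N j : ℕ) : 0 ≤ sSeq N j := by
  cases j with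
  | zero => exact Real.sInf_nonneg fun x hx => hx.1.le
  | succ k => exact Real.sInf_nonneg fun x hx => hx.1.le

lemma angle_bounds {s θ : ℝ} (hs0 : 0 < s) (hsπ : s < Real.pi) (hθ : θ ∈ Iset s) :
    |Real.cos θ| ≤ Real.sin (s / 2) ∧ Real.cos (s / 2) ≤ Real.sin θ := by
  obtain ⟨h1, h2⟩ := hθ
  have hπ := Real.pi_pos
  constructor
  · rw [abs_le]
    constructor
    · have : Real.cos ((Real.pi + s) / 2) ≤ Real.cos θ :=
        Real.cos_le_cos_of_nonneg_of_le_pi (by linarith) (by linarith) h2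
      have he : (Real.pi + s) / 2 = s / 2 + Real.pi / 2 := by ring
      rw [he, Real.cos_add_pi_div_two] at this
      linarith
    · have : Real.cos θ ≤ Real.cos ((Real.pi - s) / 2) :=
        Real.cos_le_cos_of_nonneg_of_le_pi (by linarith) (by linarith) h1
      have he : (Real.pi - s) / 2 = Real.pi / 2 - s / 2 := by ring
      rwa [he, Real.cos_pi_div_two_sub] at this
  · have habs : |Real.pi / 2 - θ| ≤ s / 2 := by
      rw [abs_le]; constructor <;> linarith
    have : Real.cos (s / 2) ≤ Real.cos |Real.pi / 2 - θ| :=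
      Real.cos_le_cos_of_nonneg_of_le_pi (abs_nonneg _) (by linarith) habs
    rwa [Real.cos_abs, Real.cos_pi_div_two_sub] at this


/-- if G(N,j,s_N^{(j−1)},s) ≤ 0 then s is (N,j)-good. -/
theorem Gfun_nonpos_imp_NjGood (N j : ℕ) (hN : 4 ≤ N) (hj1 : 1 ≤ j) (hj2 : j ≤ N - 3)
    (s : ℝ) (hs : s ∈ Set.Ioo (0 : ℝ) (Real.pi / 2))
    (hG : Gfun N j (sSeq N (j - 1)) s ≤ 0) :
    NjGood N j s := by
  obtain ⟨hs0, hsp⟩ := hs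
  have hπ := Real.pi_pos
  have hsπ : s < Real.pi := by linarith
  intro a b hab y hy
  set r := N - j - 2 with hr
  set s' := sSeq N (j - 1) with hs'
  set t := Real.sin (s / 2) with ht
  set C := Real.cos (s / 2) with hC
  set u := Real.sin (s' / 2) with hu
  have hs'0 : 0 ≤ s' := sSeq_nonneg N (j - 1)
  have ht0 : 0 < t := Real.sin_pos_of_pos_of_lt_pi (by linarith) (by linarith)
  have hC0 : 0 < C := Real.cos_pos_of_mem_Ioo ⟨by linarith, by linarith⟩
  have hG' : (r : ℝ) * t ^ 2 - u * C ^ (2 * r) + t ≤ 0 := hG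
  -- bounds on each angle
  have hbnd : ∀ m ∈ Finset.Icc 1 r,
      |Real.cos (a m)| ≤ t ∧ |Real.cos (b m)| ≤ t ∧
      C ≤ Real.sin (a m) ∧ C ≤ Real.sin (b m) := by
    intro m hm
    obtain ⟨ha, hb⟩ := hab m hm
    obtain ⟨h1, h2⟩ := angle_bounds hs0 hsπ ha
    obtain ⟨h3, h4⟩ := angle_bounds hs0 hsπ hb
    exact ⟨h1, h3, h2, h4⟩
  have hsin_le1 : ∀ x : ℝ, Real.sin x ≤ 1 := fun x => Real.sin_le_one x
  -- |F| ≤ r t²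
  have hF : |Fangle a b r| ≤ (r : ℝ) * t ^ 2 := by
    unfold Fangle
    calc |∑ m ∈ Finset.Icc 1 r, Real.cos (a m) * Real.cos (b m) *
            ∏ l ∈ Finset.Icc 1 (m - 1), (Real.sin (a l) * Real.sin (b l))|
        ≤ ∑ m ∈ Finset.Icc 1 r, |Real.cos (a m) * Real.cos (b m) *
            ∏ l ∈ Finset.Icc 1 (m - 1), (Real.sin (a l) * Real.sin (b l))| :=
          Finset.abs_sum_le_sum_abs _ _
      _ ≤ ∑ m ∈ Finset.Icc 1 r, t ^ 2 := by
          apply Finset.sum_le_sum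
          intro m hm
          obtain ⟨h1, h2, h3, h4⟩ := hbnd m hm
          have hprod : |∏ l ∈ Finset.Icc 1 (m - 1), (Real.sin (a l) * Real.sin (b l))| ≤ 1 := by
            rw [Finset.abs_prod]
            have hle1 : ∀ l : ℕ, |Real.sin (a l) * Real.sin (b l)| ≤ 1 := by
              intro l
              rw [abs_mul]
              nlinarith [Real.abs_sin_le_one (a l), Real.abs_sin_le_one (b l),
                abs_nonneg (Real.sin (a l)), abs_nonneg (Real.sin (b l))]
            exact Finset.prod_le_one (fun l _ => abs_nonneg _) (fun l _ => hle1 l)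
          rw [abs_mul, abs_mul]
          calc |Real.cos (a m)| * |Real.cos (b m)| * |∏ l ∈ Finset.Icc 1 (m - 1),
                  (Real.sin (a l) * Real.sin (b l))|
              ≤ t * t * 1 := by
                apply mul_le_mul _ hprod (abs_nonneg _) (by positivity)
                exact mul_le_mul h1 h2 (abs_nonneg _) ht0.le
            _ = t ^ 2 := by ring
      _ = (r : ℝ) * t ^ 2 := by
          rw [Finset.sum_const, Nat.card_Icc]
          simp [nsmul_eq_mul]
  -- X ≥ C^{2r}
  have hX_lb : C ^ (2 * r) ≤ Xangle a b r := by
    unfold Xangle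
    have : C ^ (2 * r) = ∏ m ∈ Finset.Icc 1 r, C * C := by
      rw [Finset.prod_const, Nat.card_Icc]
      simp [pow_mul, sq]
    rw [this]
    apply Finset.prod_le_prod
    · intro m _; positivity
    · intro m hm
      obtain ⟨_, _, h3, h4⟩ := hbnd m hm
      exact mul_le_mul h3 h4 hC0.le (le_trans hC0.le h3)
  have hX0 : 0 < Xangle a b r := lt_of_lt_of_le (by positivity) hX_lb
  -- |cos y| ≤ t
  have hy' : |Real.cos y| ≤ t := (angle_bounds hs0 hsπ hy).1
  -- key: |cos y - F| ≤ u * X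
  have hkey : |Real.cos y - Fangle a b r| ≤ u * Xangle a b r := by
    have h1 : |Real.cos y - Fangle a b r| ≤ t + (r : ℝ) * t ^ 2 := by
      calc |Real.cos y - Fangle a b r| ≤ |Real.cos y| + |Fangle a b r| := abs_sub _ _
        _ ≤ t + (r : ℝ) * t ^ 2 := add_le_add hy' hF
    have h2 : t + (r : ℝ) * t ^ 2 ≤ u * C ^ (2 * r) := by linarith
    have hu0 : 0 ≤ u := by
      by_contra h
      push_neg at h
      have : u * C ^ (2 * r) < 0 := mul_neg_of_neg_of_pos h (by positivity)
      nlinarith [sq_nonneg t, (Nat.cast_nonneg r : (0:ℝ) ≤ (r:ℝ))]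
    have h3 : u * C ^ (2 * r) ≤ u * Xangle a b r := by
      exact mul_le_mul_of_nonneg_left hX_lb hu0
    linarith
  set c : ℝ := (Real.cos y - Fangle a b r) / Xangle a b r with hc
  have hcu : |c| ≤ u := by
    rw [hc, abs_div, abs_of_pos hX0, div_le_iff₀ hX0]
    exact hkey
  -- IVT: find φ ∈ I_{s'} with cos φ = c
  have hle : (Real.pi - s') / 2 ≤ (Real.pi + s') / 2 := by linarith
  have hIVT := intermediate_value_Icc' hle (Real.continuous_cos.continuousOn
    (s := Set.Icc ((Real.pi - s') / 2) ((Real.pi + s') / 2)))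
  have hcl : Real.cos ((Real.pi - s') / 2) = u := by
    rw [show (Real.pi - s') / 2 = Real.pi / 2 - s' / 2 by ring, Real.cos_pi_div_two_sub]
  have hcr : Real.cos ((Real.pi + s') / 2) = -u := by
    rw [show (Real.pi + s') / 2 = s' / 2 + Real.pi / 2 by ring, Real.cos_add_pi_div_two]
  have hcmem : c ∈ Set.Icc (Real.cos ((Real.pi + s') / 2)) (Real.cos ((Real.pi - s') / 2)) := by
    rw [hcl, hcr]
    rw [abs_le] at hcu
    exact ⟨hcu.1, hcu.2⟩
  obtain ⟨φ, hφmem, hφ⟩ := hIVT hcmem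
  refine ⟨φ, hφmem, ?_⟩
  have hsum : Fangle a b r + Real.cos φ * Xangle a b r = Real.cos y := by
    rw [hφ, hc, div_mul_cancel₀ _ (ne_of_gt hX0)]
    ring
  rw [hsum]
  apply Real.arccos_cos
  · obtain ⟨h1, _⟩ := hy; linarith
  · obtain ⟨_, h2⟩ := hy; linarith
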